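/- Let C be a half-balanced braided monoidal category with induced balance θ_X = a_{X*}a_X. Then for any objects X, Y: β_{X,Y}^{-1}(θ_Y^{-1}⊗id_X) a_{X*⊗Y*} β_{X*,Y*}^{-1}(θ_{Y*}^{-1}⊗id_{X*}) a_{X⊗Y} = θ_X ⊗ θ_Y^{-1}. -/

import Mathlib

open CategoryTheory MonoidalCategory

universe u v

variable (C : Type u) [Category.{v} C] [MonoidalCategory C] [BraidedCategory C]

/-- A half-balanced structure on a braided monoidal category: an involutive autofunctor
`*` which anti-commutes with the tensor product and is compatible with the braiding,
together with a natural family of isomorphisms `a_X : X ≅ X*` satisfying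
`a_{X⊗Y} = (a_Y ⊗ a_X) ∘ β_{X,Y}`. -/
structure HalfBalanced where
  star : C → C
  starMap : ∀ {X Y : C}, (X ⟶ Y) → (star X ⟶ star Y)
  invol : ∀ X : C, star (star X) = X
  star_tensor : ∀ X Y : C, star (X ⊗ Y) = star Y ⊗ star X
  starMap_id : ∀ X : C, starMap (𝟙 X) = 𝟙 (star X)
  starMap_comp : ∀ {X Y Z : C} (f : X ⟶ Y) (g : Y ⟶ Z),
    starMap (f ≫ g) = starMap f ≫ starMap g
  starMap_invol : ∀ {X Y : C} (f : X ⟶ Y),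
    starMap (starMap f) = eqToHom (invol X) ≫ f ≫ eqToHom (invol Y).symm
  starMap_tensor : ∀ {X X' Y Y' : C} (f : X ⟶ X') (g : Y ⟶ Y'),
    starMap (f ⊗ₘ g) =
      eqToHom (star_tensor X Y) ≫ (starMap g ⊗ₘ starMap f) ≫ eqToHom (star_tensor X' Y').symm
  star_braiding : ∀ X Y : C,
    starMap (β_ X Y).hom =
      eqToHom (star_tensor X Y) ≫ (β_ (star Y) (star X)).hom ≫ eqToHom (star_tensor Y X).symm
  a : ∀ X : C, X ≅ star X
  a_natural : ∀ {X Y : C} (f : X ⟶ Y), f ≫ (a Y).hom = (a X).hom ≫ starMap f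
  a_tensor : ∀ X Y : C,
    (a (X ⊗ Y)).hom =
      (β_ X Y).hom ≫ ((a Y).hom ⊗ₘ (a X).hom) ≫ eqToHom (star_tensor X Y).symm

variable {C}

/-- The balance induced by a half-balanced structure: `θ_X := a_{X*} ∘ a_X`. -/
def HalfBalanced.θ (hb : HalfBalanced C) (X : C) : X ≅ X :=
  hb.a X ≪≫ hb.a (hb.star X) ≪≫ eqToIso (hb.invol X)


lemma HalfBalanced.starMap_eqToHom (hb : HalfBalanced C) {X Y : C} (h : X = Y) :
    hb.starMap (eqToHom h) = eqToHom (congrArg hb.star h) := by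
  subst h; simp [hb.starMap_id]

lemma HalfBalanced.a_star_star (hb : HalfBalanced C) (X : C) :
    (hb.a (hb.star (hb.star X))).hom =
      eqToHom (hb.invol X) ≫ (hb.a X).hom ≫ eqToHom (congrArg hb.star (hb.invol X)).symm := by
  have h := hb.a_natural (eqToHom (hb.invol X))
  rw [hb.starMap_eqToHom] at h
  rw [← Category.assoc, h]
  simp

omit [BraidedCategory C] in
lemma tensor_eqToHom' {A A' B B' : C} (h1 : A = A') (h2 : B = B') (h : A ⊗ B = A' ⊗ B') :
    eqToHom h = eqToHom h1 ⊗ₘ eqToHom h2 := by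
  subst h1; subst h2; simp

lemma HalfBalanced.a_star_star_inv (hb : HalfBalanced C) (X : C) :
    (hb.a (hb.star (hb.star X))).inv =
      eqToHom (congrArg hb.star (hb.invol X)) ≫ (hb.a X).inv ≫ eqToHom (hb.invol X).symm := by
  rw [← cancel_epi (hb.a (hb.star (hb.star X))).hom, Iso.hom_inv_id, hb.a_star_star]
  simp

lemma HalfBalanced.comp_Y (hb : HalfBalanced C) (Y : C) :
    (hb.a Y).hom ≫ (hb.θ (hb.star Y)).inv ≫ (hb.a (hb.star Y)).hom ≫
      eqToHom (hb.invol Y) ≫ (hb.θ Y).inv = (hb.θ Y).inv := by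
  simp only [HalfBalanced.θ, Iso.trans_inv, Iso.trans_hom, eqToIso.inv, Category.assoc]
  rw [hb.a_star_star_inv]
  simp

lemma HalfBalanced.comp_X (hb : HalfBalanced C) (X : C) :
    (hb.a X).hom ≫ 𝟙 (hb.star X) ≫ (hb.a (hb.star X)).hom ≫
      eqToHom (hb.invol X) ≫ 𝟙 X = (hb.θ X).hom := by
  simp [HalfBalanced.θ]


/-- In a half-balanced braided monoidal category with induced balance `θ_X = a_{X*} a_X`,
for any objects `X, Y`:
`β_{X,Y}⁻¹ (θ_Y⁻¹ ⊗ id_X) a_{X*⊗Y*} β_{X*,Y*}⁻¹ (θ_{Y*}⁻¹ ⊗ id_{X*}) a_{X⊗Y} = θ_X ⊗ θ_Y⁻¹`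
(reading composition right to left, with the identifications `(X⊗Y)* = Y*⊗X*` and
`X** = X`). -/
theorem HalfBalanced.key_identity (hb : HalfBalanced C) (X Y : C) :
    (hb.a (X ⊗ Y)).hom ≫ eqToHom (hb.star_tensor X Y) ≫
      ((hb.θ (hb.star Y)).inv ⊗ₘ 𝟙 (hb.star X)) ≫
      (β_ (hb.star X) (hb.star Y)).inv ≫
      (hb.a (hb.star X ⊗ hb.star Y)).hom ≫
      eqToHom (show hb.star (hb.star X ⊗ hb.star Y) = Y ⊗ X by
        rw [hb.star_tensor, hb.invol, hb.invol]) ≫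
      ((hb.θ Y).inv ⊗ₘ 𝟙 X) ≫ (β_ X Y).inv =
    (hb.θ X).hom ⊗ₘ (hb.θ Y).inv := by
  rw [hb.a_tensor X Y, hb.a_tensor (hb.star X) (hb.star Y)]
  have hmid : eqToHom (hb.star_tensor (hb.star X) (hb.star Y)).symm ≫
      eqToHom (show hb.star (hb.star X ⊗ hb.star Y) = Y ⊗ X by
        rw [hb.star_tensor, hb.invol, hb.invol]) =
      eqToHom (hb.invol Y) ⊗ₘ eqToHom (hb.invol X) := by
    rw [eqToHom_trans, tensor_eqToHom' (hb.invol Y) (hb.invol X)]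
  calc _
      = (β_ X Y).hom ≫ ((hb.a Y).hom ⊗ₘ (hb.a X).hom) ≫
        ((hb.θ (hb.star Y)).inv ⊗ₘ 𝟙 (hb.star X)) ≫
        ((hb.a (hb.star Y)).hom ⊗ₘ (hb.a (hb.star X)).hom) ≫
        (eqToHom (hb.invol Y) ⊗ₘ eqToHom (hb.invol X)) ≫
        ((hb.θ Y).inv ⊗ₘ 𝟙 X) ≫ (β_ X Y).inv := by
        simp only [Category.assoc, eqToHom_trans_assoc, eqToHom_trans, eqToHom_refl,
          Category.id_comp, Iso.inv_hom_id_assoc]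
        rw [tensor_eqToHom' (hb.invol Y) (hb.invol X)]
    _ = (β_ X Y).hom ≫
        (((hb.a Y).hom ≫ (hb.θ (hb.star Y)).inv ≫ (hb.a (hb.star Y)).hom ≫
            eqToHom (hb.invol Y) ≫ (hb.θ Y).inv) ⊗ₘ
          ((hb.a X).hom ≫ 𝟙 (hb.star X) ≫ (hb.a (hb.star X)).hom ≫
            eqToHom (hb.invol X) ≫ 𝟙 X)) ≫ (β_ X Y).inv := by
        simp only [← tensorHom_comp_tensorHom, Category.assoc]
    _ = (β_ X Y).hom ≫ ((hb.θ Y).inv ⊗ₘ (hb.θ X).hom) ≫ (β_ X Y).inv := by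
        rw [hb.comp_Y, hb.comp_X]
    _ = (hb.θ X).hom ⊗ₘ (hb.θ Y).inv := by
        rw [← BraidedCategory.braiding_naturality_assoc]
        simp
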